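/- Achievability by domination: Let K ≥ 2 be a natural number, M > 0 a real number, and let d : Fin K → ℝ satisfy d_i ≥ 0 for all i and d_i + d_j ≤ M for all i ≠ j. Suppose further that d₀ ≥ d₁ ≥ d_k for all k ≥ 2 (i.e., the first two coordinates are the two largest). Then the point whose first coordinate is d₀ and whose remaining K − 1 coordinates all equal d₁ lies in the convex hull of the three points (M, 0, …, 0), (M/2, M/2, …, M/2), and (0, 0, …, 0) in ℝ^K, and it dominates d componentwise: d_k ≤ d₁ for every k ≥ 2, so d is componentwise at most this convex-hull point. -/

import Mathlib

/-- Achievability by domination. If d is in the region and its two largest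
coordinates are d₀ ≥ d₁ (positions 0 and 1), then the point (d₀, d₁, …, d₁) lies in the
convex hull of {(M,0,…,0), (M/2,…,M/2), 0} and dominates d componentwise. -/
theorem achievability_by_domination (K : ℕ) (hK : 2 ≤ K) (M : ℝ) (hM : 0 < M)
    (d : Fin K → ℝ) (hpos : ∀ i, 0 ≤ d i)
    (hpair : ∀ i j, i ≠ j → d i + d j ≤ M)
    (h01 : d ⟨1, by omega⟩ ≤ d ⟨0, by omega⟩)
    (hrest : ∀ k : Fin K, 2 ≤ (k : ℕ) → d k ≤ d ⟨1, by omega⟩) :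
    (fun i : Fin K => if i = (⟨0, by omega⟩ : Fin K) then d ⟨0, by omega⟩ else d ⟨1, by omega⟩) ∈
      convexHull ℝ {(fun i : Fin K => if i = (⟨0, by omega⟩ : Fin K) then M else 0),
        (fun _ : Fin K => M / 2), (0 : Fin K → ℝ)} ∧
    ∀ k : Fin K, d k ≤
      (fun i : Fin K => if i = (⟨0, by omega⟩ : Fin K) then d ⟨0, by omega⟩ else d ⟨1, by omega⟩) k := by
  set i0 : Fin K := ⟨0, by omega⟩
  set i1 : Fin K := ⟨1, by omega⟩
  have hne : i0 ≠ i1 := by simp [i0, i1, Fin.ext_iff]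
  have hsum : d i0 + d i1 ≤ M := hpair i0 i1 hne
  have h1pos : 0 ≤ d i1 := hpos i1
  set a : ℝ := (d i0 - d i1) / M with ha
  set b : ℝ := 2 * d i1 / M with hb
  set c : ℝ := 1 - a - b with hc
  have ha0 : 0 ≤ a := div_nonneg (by linarith) hM.le
  have hb0 : 0 ≤ b := div_nonneg (by linarith) hM.le
  have hc0 : 0 ≤ c := by
    have : a + b ≤ 1 := by
      rw [ha, hb, ← add_div, div_le_one hM]; linarith
    linarith
  set x : Fin K → ℝ := fun i => if i = i0 then M else 0
  set y : Fin K → ℝ := fun _ : Fin K => M / 2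
  constructor
  · have hconv : Convex ℝ (convexHull ℝ {x, y, (0 : Fin K → ℝ)}) := convex_convexHull ℝ _
    have hx : x ∈ convexHull ℝ {x, y, (0 : Fin K → ℝ)} :=
      subset_convexHull ℝ _ (by simp)
    have hy : y ∈ convexHull ℝ {x, y, (0 : Fin K → ℝ)} :=
      subset_convexHull ℝ _ (by simp)
    have hz : (0 : Fin K → ℝ) ∈ convexHull ℝ {x, y, (0 : Fin K → ℝ)} :=
      subset_convexHull ℝ _ (by simp)
    have hmem : a • x + b • y + c • (0 : Fin K → ℝ) ∈
        convexHull ℝ {x, y, (0 : Fin K → ℝ)} := by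
      have hbc : b + c = 1 - a := by rw [hc]; ring
      by_cases hbc0 : b + c = 0
      · have hb' : b = 0 := by linarith
        have hc' : c = 0 := by linarith
        have ha1 : a = 1 := by rw [hc] at hc'; linarith
        simpa [hb', hc', ha1] using hx
      · have hbcpos : 0 < b + c := lt_of_le_of_ne (by linarith) (Ne.symm hbc0)
        have hw : (b / (b + c)) • y + (c / (b + c)) • (0 : Fin K → ℝ) ∈
            convexHull ℝ {x, y, (0 : Fin K → ℝ)} :=
          hconv hy hz (div_nonneg hb0 hbcpos.le) (div_nonneg hc0 hbcpos.le)
            (by field_simp)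
        have := hconv hx hw ha0 (by linarith : (0:ℝ) ≤ b + c) (by linarith)
        have heq : a • x + (b + c) • ((b / (b + c)) • y + (c / (b + c)) • (0 : Fin K → ℝ))
            = a • x + b • y + c • (0 : Fin K → ℝ) := by
          rw [smul_add, smul_smul, smul_smul]
          rw [mul_div_cancel₀ _ hbc0, mul_div_cancel₀ _ hbc0]
          abel
        rwa [heq] at this
    have hpt : (fun i : Fin K => if i = i0 then d i0 else d i1)
        = a • x + b • y + c • (0 : Fin K → ℝ) := by
      funext i
      simp only [Pi.add_apply, Pi.smul_apply, Pi.zero_apply, smul_eq_mul, x, y]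
      by_cases h : i = i0 <;> simp [h, ha, hb] <;> field_simp <;> ring
    rw [hpt]; exact hmem
  · intro k
    by_cases h0 : k = i0
    · simp [h0]
    · simp only [h0, if_false]
      rcases Nat.lt_or_ge (k : ℕ) 2 with hk2 | hk2
      · have : (k : ℕ) = 1 := by
          have : (k : ℕ) ≠ 0 := fun h => h0 (Fin.ext h)
          omega
        have : k = i1 := Fin.ext this
        simp [this]
      · exact hrest k hk2
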